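/- Let (u_1,...,u_k) be a tuple of positive integers and suppose there exists a real T and ε > 0 such that every t ∈ (T, T+ε) satisfies ‖t·u_i‖ ≥ 1/(k+1) for all i. Then there exists a positive integer L such that for every integer d ≥ L, the tuple has a witness time in (1/d)·Z. -/
import Mathlib


/-- Distance from a real number to the nearest integer. -/
noncomputable def distNearestInt (x : ℝ) : ℝ := |x - round x|

theorem stmt_15 (k : ℕ) (u : Fin k → ℕ) (hupos : ∀ i, 0 < u i)
    (T ε : ℝ) (hε : 0 < ε)
    (h : ∀ t : ℝ, T < t → t < T + ε →
      ∀ i : Fin k, distNearestInt (t * (u i : ℝ)) ≥ 1 / ((k : ℝ) + 1)) :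
    ∃ L : ℕ, 0 < L ∧ ∀ d : ℕ, L ≤ d →
      ∃ n : ℤ, ∀ i : Fin k,
        distNearestInt (((n : ℝ) / (d : ℝ)) * (u i : ℝ)) ≥ 1 / ((k : ℝ) + 1) := by
  refine ⟨⌈1/ε⌉₊ + 1, Nat.succ_pos _, fun d hd => ?_⟩
  have hd0 : 0 < d := lt_of_lt_of_le (Nat.succ_pos _) hd
  have hdR : (0:ℝ) < d := by exact_mod_cast hd0
  have hdε : 1 / ε < d := by
    calc 1/ε ≤ ⌈1/ε⌉₊ := Nat.le_ceil _
    _ < (⌈1/ε⌉₊ + 1 : ℕ) := by exact_mod_cast Nat.lt_succ_self _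
    _ ≤ d := by exact_mod_cast hd
  have hinv : 1 / (d:ℝ) < ε := by
    rw [div_lt_iff₀ hdR]
    have := (div_lt_iff₀ hε).mp hdε
    linarith
  refine ⟨⌊(d:ℝ) * T⌋ + 1, fun i => ?_⟩
  apply h
  · rw [lt_div_iff₀ hdR]
    have := Int.lt_floor_add_one ((d:ℝ) * T)
    push_cast
    linarith
  · rw [div_lt_iff₀ hdR]
    have := Int.floor_le ((d:ℝ) * T)
    have h2 : (1:ℝ)/d * d = 1 := by field_simp
    push_cast
    nlinarith
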